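/- Let T be a rooted tree and let D = {D_1, ..., D_s} be a weakly 3-suitable family of drawings of T. Then the family {D_1, ..., D_s, mirror(D_1), ..., mirror(D_s)}, where mirror(D) reverses the left-to-right order of children at every node, is a 3-suitable family of drawings of T. Consequently α(T) ≤ 2·ω(T). -/

import Mathlib

/-- A rooted tree: every vertex reaches the root by iterating `parent`. -/
structure RTree where
  V : Type
  root : V
  parent : V → V
  parent_root : parent root = root
  reach : ∀ v, ∃ k, parent^[k] v = root

/-- `u` is an ancestor of `v` (possibly `u = v`). -/
def RTree.Ancestor (T : RTree) (u v : T.V) : Prop :=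
  ∃ k, T.parent^[k] v = u

/-- Two vertices are incomparable if neither is an ancestor of the other. -/
def RTree.Incomp (T : RTree) (u v : T.V) : Prop :=
  ¬ T.Ancestor u v ∧ ¬ T.Ancestor v u

/-- A strict total order on the vertices of a rooted tree is the preorder (DFS) traversal
order of some drawing of the tree iff ancestors come first and every subtree forms an
interval; we take this characterization as the definition. -/
def IsTreeOrder (T : RTree) (ρ : T.V → T.V → Prop) : Prop :=
  IsStrictTotalOrder T.V ρ ∧
  (∀ u v, u ≠ v → T.Ancestor u v → ρ u v) ∧
  (∀ u v w, ρ u v → ρ v w → T.Ancestor u w → T.Ancestor u v)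

/-- The preorder traversal order of the mirror image of a drawing: comparable pairs keep
their (ancestor-first) order, incomparable pairs are swapped. -/
def mirrorOrder (T : RTree) (ρ : T.V → T.V → Prop) : T.V → T.V → Prop :=
  fun u v => (u ≠ v ∧ T.Ancestor u v) ∨ (T.Incomp u v ∧ ρ v u)

/-- A family of drawings (given by their preorder traversal orders) is *3-suitable* if for
any three pairwise incomparable vertices `a b c` and distinguished vertex `a`, some drawing's
preorder lists `a` after both `b` and `c`. -/
def TreeFam3Suitable (T : RTree) {ι : Type*} (D : ι → T.V → T.V → Prop) : Prop :=
  ∀ a b c : T.V, T.Incomp a b → T.Incomp a c → T.Incomp b c →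
    ∃ i, D i b a ∧ D i c a

/-- A family of drawings is *weakly 3-suitable* if for any three pairwise incomparable
vertices `a b c` and distinguished vertex `a`, some drawing's preorder lists `a` after both
`b` and `c` or before both `b` and `c`. -/
def TreeFamWeakly3Suitable (T : RTree) {ι : Type*} (D : ι → T.V → T.V → Prop) : Prop :=
  ∀ a b c : T.V, T.Incomp a b → T.Incomp a c → T.Incomp b c →
    ∃ i, (D i b a ∧ D i c a) ∨ (D i a b ∧ D i a c)

/-- Minimum cardinality of a weakly 3-suitable family of drawings of `T`. -/
noncomputable def treeOmega (T : RTree) : ℕ :=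
  sInf {k | ∃ D : Fin k → T.V → T.V → Prop,
    (∀ i, IsTreeOrder T (D i)) ∧ TreeFamWeakly3Suitable T D}

/-- Minimum cardinality of a 3-suitable family of drawings of `T`. -/
noncomputable def treeAlpha (T : RTree) : ℕ :=
  sInf {k | ∃ D : Fin k → T.V → T.V → Prop,
    (∀ i, IsTreeOrder T (D i)) ∧ TreeFam3Suitable T D}

/-- `S` is the vertex set of the (unique) simple path between `a` and `b` in the rooted
tree `T`: it goes from `a` up to the least common ancestor `m` and down to `b`. -/
def IsTreePath (T : RTree) (S : Set T.V) (a b : T.V) : Prop :=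
  ∃ m, T.Ancestor m a ∧ T.Ancestor m b ∧
    (∀ m', T.Ancestor m' a → T.Ancestor m' b → T.Ancestor m' m) ∧
    S = {v | T.Ancestor m v ∧ (T.Ancestor v a ∨ T.Ancestor v b)}

/-- A containment model of the poset `X` by paths of the tree `T` (a CPT model). -/
def CPTModel (T : RTree) {X : Type*} [PartialOrder X] (M : X → Set T.V) : Prop :=
  (∀ x, ∃ a b, IsTreePath T (M x) a b) ∧
  ∀ x y : X, x ≠ y → (x ≤ y ↔ M x ⊂ M y)

lemma anc_refl (T : RTree) (v : T.V) : T.Ancestor v v := ⟨0, rfl⟩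

lemma anc_trans (T : RTree) {u v w : T.V} (h1 : T.Ancestor u v) (h2 : T.Ancestor v w) :
    T.Ancestor u w := by
  obtain ⟨k, hk⟩ := h1; obtain ⟨j, hj⟩ := h2
  exact ⟨k + j, by rw [Function.iterate_add_apply, hj, hk]⟩

lemma anc_antisymm (T : RTree) {u v : T.V} (h1 : T.Ancestor u v) (h2 : T.Ancestor v u) :
    u = v := by
  obtain ⟨k, hk⟩ := h1; obtain ⟨j, hj⟩ := h2
  rcases Nat.eq_zero_or_pos k with rfl | hkpos
  · exact hk.symm
  have hcyc : T.parent^[j + k] v = v := by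
    rw [Function.iterate_add_apply, hk, hj]
  have hper : ∀ m, T.parent^[m * (j + k)] v = v := by
    intro m
    induction m with
    | zero => simp
    | succ m ih => rw [Nat.succ_mul, Function.iterate_add_apply, hcyc, ih]
  obtain ⟨n, hn⟩ := T.reach v
  have hvroot : v = T.root := by
    have hle : n ≤ n * (j + k) := Nat.le_mul_of_pos_right n (by omega)
    have hsplit : T.parent^[n * (j + k)] v = T.root := by
      have h := Function.iterate_add_apply T.parent (n * (j + k) - n) n v
      rw [hn] at h
      rw [show n * (j + k) = (n * (j + k) - n) + n by omega, h,
        Function.iterate_fixed T.parent_root]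
    rw [← hper n, hsplit]
  have hu : u = T.root := by
    rw [← hk, hvroot, Function.iterate_fixed T.parent_root]
  rw [hu, hvroot]

lemma anc_total (T : RTree) {u w v : T.V} (h1 : T.Ancestor u v) (h2 : T.Ancestor w v) :
    T.Ancestor u w ∨ T.Ancestor w u := by
  obtain ⟨k, hk⟩ := h1; obtain ⟨j, hj⟩ := h2
  rcases le_total k j with h | h
  · right
    exact ⟨j - k, by rw [← hk, ← Function.iterate_add_apply, Nat.sub_add_cancel h, hj]⟩
  · left
    exact ⟨k - j, by rw [← hj, ← Function.iterate_add_apply, Nat.sub_add_cancel h, hk]⟩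

lemma mirror_isTreeOrder (T : RTree) {ρ : T.V → T.V → Prop} (h : IsTreeOrder T ρ) :
    IsTreeOrder T (mirrorOrder T ρ) := by
  obtain ⟨hsto, hanc, hint⟩ := h
  have tri : ∀ a b, ρ a b ∨ a = b ∨ ρ b a := fun a b => by
    by_cases h1 : ρ a b
    · exact Or.inl h1
    by_cases h2 : ρ b a
    · exact Or.inr (Or.inr h2)
    exact Or.inr (Or.inl (hsto.trichotomous a b h1 h2))
  have irr : ∀ a, ¬ ρ a a := hsto.irrefl
  have tr : ∀ a b c, ρ a b → ρ b c → ρ a c := fun a b c => hsto.trans a b c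
  have asymm : ∀ a b, ρ a b → ¬ ρ b a := fun a b hab hba => irr a (tr _ _ _ hab hba)
  have mtr : ∀ u v w, mirrorOrder T ρ u v → mirrorOrder T ρ v w → mirrorOrder T ρ u w := by
    intro u v w huv hvw
    rcases huv with ⟨hne1, ha1⟩ | ⟨hi1, hr1⟩
    · rcases hvw with ⟨hne2, ha2⟩ | ⟨hi2, hr2⟩
      · refine Or.inl ⟨?_, anc_trans T ha1 ha2⟩
        rintro rfl
        exact hne2 (anc_antisymm T ha2 ha1)
      · have hneuw : u ≠ w := by rintro rfl; exact hi2.2 ha1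
        by_cases hAuw : T.Ancestor u w
        · exact Or.inl ⟨hneuw, hAuw⟩
        · have hAwu : ¬ T.Ancestor w u := fun hwu => hi2.2 (anc_trans T hwu ha1)
          have hwu : ρ w u := by
            rcases tri u w with huw | rfl | hwu
            · exact absurd (hint u w v huw hr2 ha1) hAuw
            · exact absurd rfl hneuw
            · exact hwu
          exact Or.inr ⟨⟨hAuw, hAwu⟩, hwu⟩
    · rcases hvw with ⟨hne2, ha2⟩ | ⟨hi2, hr2⟩
      · have hneuw : u ≠ w := by rintro rfl; exact hi1.2 ha2
        have hAuw : ¬ T.Ancestor u w := by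
          intro huw
          rcases anc_total T huw ha2 with h' | h'
          · exact hi1.1 h'
          · exact hi1.2 h'
        have hAwu : ¬ T.Ancestor w u := fun hwu => hi1.2 (anc_trans T ha2 hwu)
        have hwu : ρ w u := by
          rcases tri u w with huw | rfl | hwu
          · exact absurd (hint v u w hr1 huw ha2) hi1.2
          · exact absurd rfl hneuw
          · exact hwu
        exact Or.inr ⟨⟨hAuw, hAwu⟩, hwu⟩
      · have hwu : ρ w u := tr _ _ _ hr2 hr1
        have hneuw : u ≠ w := by rintro rfl; exact irr u hwu
        by_cases hAuw : T.Ancestor u w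
        · exact Or.inl ⟨hneuw, hAuw⟩
        · have hAwu : ¬ T.Ancestor w u := fun h' =>
            hi2.2 (hint w v u hr2 hr1 h')
          exact Or.inr ⟨⟨hAuw, hAwu⟩, hwu⟩
  refine ⟨?_, fun u v hne ha => Or.inl ⟨hne, ha⟩, ?_⟩
  · have htri : ∀ a b, mirrorOrder T ρ a b ∨ a = b ∨ mirrorOrder T ρ b a := by
      intro a b
      by_cases hab : a = b
      · exact Or.inr (Or.inl hab)
      · by_cases h1 : T.Ancestor a b
        · exact Or.inl (Or.inl ⟨hab, h1⟩)
        by_cases h2 : T.Ancestor b a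
        · exact Or.inr (Or.inr (Or.inl ⟨Ne.symm hab, h2⟩))
        rcases tri a b with h' | h' | h'
        · exact Or.inr (Or.inr (Or.inr ⟨⟨h2, h1⟩, h'⟩))
        · exact absurd h' hab
        · exact Or.inl (Or.inr ⟨⟨h1, h2⟩, h'⟩)
    have hirr : ∀ a, ¬ mirrorOrder T ρ a a := by
      rintro a (⟨hne, _⟩ | ⟨hi, _⟩)
      · exact hne rfl
      · exact hi.1 (anc_refl T a)
    exact { trichotomous := fun a b h1 h2 => by
              rcases htri a b with h | h | h
              · exact absurd h h1
              · exact h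
              · exact absurd h h2,
            irrefl := hirr, trans := mtr }
  · rintro u v w (⟨hne1, ha1⟩ | ⟨hi1, hr1⟩) hvw hAuw
    · exact ha1
    · rcases hvw with ⟨hne2, ha2⟩ | ⟨hi2, hr2⟩
      · rcases anc_total T hAuw ha2 with h' | h'
        · exact absurd h' hi1.1
        · exact absurd h' hi1.2
      · have hwu : ρ w u := tr _ _ _ hr2 hr1
        have hneuw : u ≠ w := by rintro rfl; exact irr u hwu
        exact absurd (hanc u w hneuw hAuw) (asymm w u hwu)

lemma mirror_fam (T : RTree) (s : ℕ) (D : Fin s → T.V → T.V → Prop)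
    (hD : ∀ i, IsTreeOrder T (D i)) (hws : TreeFamWeakly3Suitable T D) :
    (∀ j : Fin s ⊕ Fin s,
        IsTreeOrder T (Sum.elim D (fun i => mirrorOrder T (D i)) j)) ∧
    TreeFam3Suitable T (Sum.elim D (fun i => mirrorOrder T (D i))) := by
  constructor
  · rintro (i | i)
    · exact hD i
    · exact mirror_isTreeOrder T (hD i)
  · intro a b c hab hac hbc
    obtain ⟨i, h | h⟩ := hws a b c hab hac hbc
    · exact ⟨Sum.inl i, h⟩
    · exact ⟨Sum.inr i, Or.inr ⟨⟨hab.2, hab.1⟩, h.1⟩, Or.inr ⟨⟨hac.2, hac.1⟩, h.2⟩⟩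

/-- If `D_1, ..., D_s` is a weakly 3-suitable family of drawings of a
rooted tree `T` (drawings given by their preorder traversal orders), then together with
their mirror images they form a 3-suitable family of drawings of `T`; consequently
`α(T) ≤ 2·ω(T)`. -/
theorem mirror_family_3suitable (T : RTree) (s : ℕ)
    (D : Fin s → T.V → T.V → Prop)
    (hD : ∀ i, IsTreeOrder T (D i))
    (hws : TreeFamWeakly3Suitable T D) :
    (∀ j : Fin s ⊕ Fin s,
        IsTreeOrder T (Sum.elim D (fun i => mirrorOrder T (D i)) j)) ∧
    TreeFam3Suitable T (Sum.elim D (fun i => mirrorOrder T (D i))) ∧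
    treeAlpha T ≤ 2 * treeOmega T := by
  obtain ⟨h1, h2⟩ := mirror_fam T s D hD hws
  refine ⟨h1, h2, ?_⟩
  set Sω := {k | ∃ D : Fin k → T.V → T.V → Prop,
    (∀ i, IsTreeOrder T (D i)) ∧ TreeFamWeakly3Suitable T D} with hSω
  by_cases hne : Sω.Nonempty
  · obtain ⟨D₀, hD₀, hws₀⟩ := Nat.sInf_mem hne
    set s₀ := treeOmega T
    obtain ⟨g1, g2⟩ := mirror_fam T s₀ D₀ hD₀ hws₀
    have hmem : 2 * s₀ ∈ {k | ∃ D : Fin k → T.V → T.V → Prop,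
        (∀ i, IsTreeOrder T (D i)) ∧ TreeFam3Suitable T D} := by
      set e : Fin (2 * s₀) ≃ Fin s₀ ⊕ Fin s₀ :=
        (finCongr (two_mul s₀)).trans finSumFinEquiv.symm with he
      refine ⟨fun j => Sum.elim D₀ (fun i => mirrorOrder T (D₀ i)) (e j),
        fun j => g1 _, ?_⟩
      intro a b c hab hac hbc
      obtain ⟨i, hi1, hi2⟩ := g2 a b c hab hac hbc
      refine ⟨e.symm i, ?_, ?_⟩
      · show Sum.elim D₀ (fun i => mirrorOrder T (D₀ i)) (e (e.symm i)) b a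
        rw [Equiv.apply_symm_apply]; exact hi1
      · show Sum.elim D₀ (fun i => mirrorOrder T (D₀ i)) (e (e.symm i)) c a
        rw [Equiv.apply_symm_apply]; exact hi2
    exact Nat.sInf_le hmem
  · have hempty : Sω = ∅ := Set.not_nonempty_iff_eq_empty.mp hne
    have hαempty : {k | ∃ D : Fin k → T.V → T.V → Prop,
        (∀ i, IsTreeOrder T (D i)) ∧ TreeFam3Suitable T D} = ∅ := by
      rw [Set.eq_empty_iff_forall_notMem]
      rintro k ⟨Dk, hDk, hsk⟩
      have : k ∈ Sω := ⟨Dk, hDk, fun a b c h1' h2' h3' =>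
        (hsk a b c h1' h2' h3').imp fun i hi => Or.inl hi⟩
      rw [hempty] at this
      exact this
    rw [treeAlpha, hαempty, Nat.sInf_empty]
    exact Nat.zero_le _
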